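/- Suppose 2·1_R ≠ 0 in R, r is a root in R of x² − x − 1 = 0 with s := 1 − r, and the multiplicative order of r is finite and odd. Then the multiplicative order of s is even. -/
import Mathlib


theorem order_s_even_of_order_r_odd {R : Type*} [CommRing R] (h1 : (1 : R) ≠ 0)
    (h2 : (2 : R) ≠ 0) (r : R) (hr : r ^ 2 - r - 1 = 0) (s : R) (hs : s = 1 - r)
    (hfin : 0 < orderOf r) (hodd : Odd (orderOf r)) :
    Even (orderOf s) := by
  have hrs : r * s = -1 := by rw [hs]; linear_combination -hr
  by_contra h
  have hm : Odd (orderOf s) := Nat.odd_iff.mpr (Nat.not_even_iff.mp h)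
  have key : r ^ orderOf s = -1 := by
    have h3 : (r * s) ^ orderOf s = (-1 : R) ^ orderOf s := by rw [hrs]
    rwa [mul_pow, pow_orderOf_eq_one s, mul_one, hm.neg_one_pow] at h3
  have hd : orderOf r ∣ orderOf s * 2 := by
    apply orderOf_dvd_of_pow_eq_one
    rw [pow_mul, key]
    ring
  have hcop : Nat.Coprime (orderOf r) 2 := by
    exact hodd.coprime_two_right
  have hd2 : orderOf r ∣ orderOf s := hcop.dvd_of_dvd_mul_right hd
  have : r ^ orderOf s = 1 := orderOf_dvd_iff_pow_eq_one.mp hd2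
  rw [key] at this
  exact h2 (by linear_combination -this)
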